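/- For a Banach lattice E, the norm of the dual E' is order continuous if and only if f_n(x_n) → 0 for every order bounded sequence (f_n) of E' and every disjoint sequence (x_n) in the closed unit ball of E. -/

import Mathlib

set_option linter.unusedSectionVars false
set_option maxHeartbeats 1000000



open Filter Topology NormedSpace

open Filter Topology

section Defs

/-- A sequence in a lattice ordered group is pairwise disjoint. -/
def DisjSeq {G : Type*} [Lattice G] [AddCommGroup G] (y : ℕ → G) : Prop :=
  ∀ m n : ℕ, m ≠ n → |y m| ⊓ |y n| = 0

/-- The solid hull of a set. -/
def SolidHull {G : Type*} [Lattice G] [AddCommGroup G] (A : Set G) : Set G :=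
  {z | ∃ a ∈ A, |z| ≤ |a|}

/-- A sequence is order bounded. -/
def OrdBddSeq {G : Type*} [Preorder G] (y : ℕ → G) : Prop :=
  ∃ a b : G, ∀ n, a ≤ y n ∧ y n ≤ b

/-- A set is L-weakly compact: every disjoint sequence in its solid hull is norm null. -/
def LWCompactSet {G : Type*} [NormedAddCommGroup G] [Lattice G] (A : Set G) : Prop :=
  ∀ y : ℕ → G, (∀ n, y n ∈ SolidHull A) → DisjSeq y →
    Tendsto (fun n => ‖y n‖) atTop (𝓝 0)

/-- An operator is order L-weakly compact. -/
def OrderLWC {G H : Type*} [NormedAddCommGroup G] [Lattice G] [NormedSpace ℝ G]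
    [NormedAddCommGroup H] [Lattice H] [NormedSpace ℝ H] (T : G →L[ℝ] H) : Prop :=
  ∀ x : G, 0 ≤ x → LWCompactSet (T '' Set.Icc 0 x)

/-- An operator is L-weakly compact. -/
def LWC {X H : Type*} [NormedAddCommGroup X] [NormedSpace ℝ X]
    [NormedAddCommGroup H] [Lattice H] [NormedSpace ℝ H] (T : X →L[ℝ] H) : Prop :=
  LWCompactSet (T '' Metric.closedBall 0 1)

/-- An operator is M-weakly compact. -/
def MWC {G Y : Type*} [NormedAddCommGroup G] [Lattice G] [NormedSpace ℝ G]
    [NormedAddCommGroup Y] [NormedSpace ℝ Y] (T : G →L[ℝ] Y) : Prop :=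
  ∀ x : ℕ → G, (∃ C, ∀ n, ‖x n‖ ≤ C) → DisjSeq x →
    Tendsto (fun n => ‖T (x n)‖) atTop (𝓝 0)

/-- An operator is order M-weakly compact. -/
def OrderMWC {G H : Type*} [NormedAddCommGroup G] [Lattice G] [NormedSpace ℝ G]
    [NormedAddCommGroup H] [NormedSpace ℝ H] [Lattice (StrongDual ℝ H)]
    (T : G →L[ℝ] H) : Prop :=
  ∀ x : ℕ → G, (∀ n, ‖x n‖ ≤ 1) → DisjSeq x →
    ∀ f : ℕ → StrongDual ℝ H, OrdBddSeq f →
      Tendsto (fun n => f n (T (x n))) atTop (𝓝 0)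

/-- The norm is order continuous: every decreasing net with infimum `0` is norm null. -/
def OrderContinuousNorm (G : Type*) [NormedAddCommGroup G] [Lattice G] : Prop :=
  ∀ (ι : Type*) [Preorder ι] [Nonempty ι] [IsDirected ι (· ≤ ·)] (x : ι → G),
    Antitone x → IsGLB (Set.range x) 0 → Tendsto (fun i => ‖x i‖) atTop (𝓝 0)

/-- An operator between Banach lattices is order bounded. -/
def OrderBoundedOp {G H : Type*} [NormedAddCommGroup G] [Lattice G] [NormedSpace ℝ G]
    [NormedAddCommGroup H] [Lattice H] [NormedSpace ℝ H] (T : G →L[ℝ] H) : Prop :=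
  ∀ a b : G, ∃ c d : H, ∀ x : G, a ≤ x → x ≤ b → c ≤ T x ∧ T x ≤ d

/-- An operator into a Banach lattice is strong order bounded. -/
def StrongOrderBounded {X H : Type*} [NormedAddCommGroup X] [NormedSpace ℝ X]
    [NormedAddCommGroup H] [Lattice H] [NormedSpace ℝ H] (T : X →L[ℝ] H) : Prop :=
  ∃ a b : H, ∀ x : X, ‖x‖ ≤ 1 → a ≤ T x ∧ T x ≤ b

end Defs



section AuxE
variable {E : Type*} [NormedAddCommGroup E] [Lattice E] [HasSolidNorm E]
    [IsOrderedAddMonoid E] [NormedSpace ℝ E]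

lemma aux_inf_add_le {a b c : E} (ha : 0 ≤ a) (hb : 0 ≤ b) (hc : 0 ≤ c) :
    (a + b) ⊓ c ≤ a ⊓ c + b ⊓ c := by
  have h1 : a ⊓ c + b ⊓ c = ((a + b) ⊓ (a + c)) ⊓ ((c + b) ⊓ (c + c)) := by
    rw [add_inf, inf_add, inf_add]; ac_rfl
  rw [h1]
  refine le_inf (le_inf inf_le_left ?_) (le_inf ?_ ?_)
  · exact inf_le_right.trans (le_add_of_nonneg_left ha)
  · exact inf_le_right.trans (le_add_of_nonneg_right hb)
  · exact inf_le_right.trans (le_add_of_nonneg_right hc)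

lemma aux_inf_nsmul_le {a b : E} (ha : 0 ≤ a) (hb : 0 ≤ b) (n : ℕ) :
    a ⊓ (n • b) ≤ n • (a ⊓ b) := by
  induction n with
  | zero => simp
  | succ k ih =>
      have h1 : a ⊓ ((k • b) + b) ≤ a ⊓ (k • b) + a ⊓ b := by
        rw [inf_comm]
        refine (aux_inf_add_le (nsmul_nonneg hb k) hb ha).trans ?_
        rw [inf_comm (k • b) a, inf_comm b a]
      calc a ⊓ ((k+1) • b) = a ⊓ ((k • b) + b) := by rw [succ_nsmul]
        _ ≤ a ⊓ (k • b) + a ⊓ b := h1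
        _ ≤ k • (a ⊓ b) + a ⊓ b := by gcongr
        _ = (k+1) • (a ⊓ b) := (succ_nsmul _ k).symm

lemma aux_nsmul_inf {a b : E} (ha : 0 ≤ a) (hb : 0 ≤ b) (hab : a ⊓ b = 0) (n : ℕ) :
    (n • a) ⊓ b = 0 := by
  have h1 : b ⊓ (n • a) ≤ n • (b ⊓ a) := aux_inf_nsmul_le hb ha n
  rw [inf_comm b a] at h1
  rw [hab, smul_zero] at h1
  rw [inf_comm] at h1
  exact le_antisymm h1 (le_inf (nsmul_nonneg ha n) hb)

lemma aux_nsmul_inf' {a b : E} (ha : 0 ≤ a) (hb : 0 ≤ b) (hab : a ⊓ b = 0) (n m : ℕ) :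
    (n • a) ⊓ (m • b) = 0 := by
  have h1 : b ⊓ (n • a) = 0 := by rw [inf_comm]; exact aux_nsmul_inf ha hb hab n
  have := aux_nsmul_inf hb (nsmul_nonneg ha n) h1 m
  rw [inf_comm] at this; exact this

lemma aux_nsmul_cancel {z : E} {n : ℕ} (hn : 0 < n) (h : 0 ≤ n • z) : 0 ≤ z := by
  have key : z⁻ ⊓ (n • z⁺) ≤ n • (z⁻ ⊓ z⁺) :=
    aux_inf_nsmul_le (negPart_nonneg z) (posPart_nonneg z) n
  rw [inf_comm (z⁻) (z⁺), posPart_inf_negPart_eq_zero, smul_zero] at key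
  have hsub : n • z = n • z⁺ - n • z⁻ := by
    rw [← smul_sub, posPart_sub_negPart]
  have h2 : n • z⁻ ≤ n • z⁺ := by
    rw [hsub] at h; exact sub_nonneg.mp h
  have h3 : z⁻ ≤ n • z⁻ := by
    calc z⁻ = 1 • z⁻ := (one_smul ℕ _).symm
    _ ≤ n • z⁻ := nsmul_le_nsmul_left (negPart_nonneg z) hn
  have h4 : z⁻ ≤ 0 := by
    have := le_inf (h3.trans h2) (le_refl (z⁻))
    rw [inf_comm] at this
    exact this.trans key
  have h5 : z⁻ = 0 := le_antisymm h4 (negPart_nonneg z)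
  rwa [← negPart_eq_zero]

end AuxE
section AuxE2
variable {E : Type*} [NormedAddCommGroup E] [Lattice E] [HasSolidNorm E]
    [IsOrderedAddMonoid E] [NormedSpace ℝ E]

lemma aux_smul_nonneg {c : ℝ} {x : E} (hc : 0 ≤ c) (hx : 0 ≤ x) : 0 ≤ c • x := by
  have hpow : ∀ k : ℕ, (0:E) ≤ ((2:ℝ)^k)⁻¹ • x := by
    intro k
    refine aux_nsmul_cancel (n := 2^k) (by positivity) ?_
    rw [← Nat.cast_smul_eq_nsmul ℝ, Nat.cast_pow, Nat.cast_ofNat, smul_smul,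
      mul_inv_cancel₀ (by positivity), one_smul]
    exact hx
  set q : ℕ → ℝ := fun k => (⌊c * 2^k⌋₊ : ℝ) / 2^k with hq
  have hqx : ∀ k, (0:E) ≤ q k • x := by
    intro k
    have heq : q k • x = (⌊c * 2^k⌋₊ : ℕ) • (((2:ℝ)^k)⁻¹ • x) := by
      rw [← Nat.cast_smul_eq_nsmul ℝ, smul_smul]
      simp only [hq, div_eq_mul_inv]
    rw [heq]
    exact nsmul_nonneg (hpow k) _
  have hup : ∀ k, q k ≤ c := by
    intro k
    have h2k : (0:ℝ) < 2^k := by positivity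
    rw [hq, div_le_iff₀ h2k]
    exact Nat.floor_le (by positivity)
  have hlo : ∀ k, c - ((2:ℝ)^k)⁻¹ ≤ q k := by
    intro k
    have h2k : (0:ℝ) < 2^k := by positivity
    have hfl : c * 2^k < ⌊c * 2^k⌋₊ + 1 := Nat.lt_floor_add_one _
    have hqk : q k = (⌊c * 2^k⌋₊ : ℝ) / 2^k := rfl
    rw [hqk, le_div_iff₀ h2k]
    have harith : (c - ((2:ℝ)^k)⁻¹) * 2^k = c * 2^k - 1 := by field_simp
    rw [harith]
    linarith
  have h2inv : Tendsto (fun k : ℕ => ((2:ℝ)^k)⁻¹) atTop (𝓝 0) := by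
    simpa using tendsto_pow_atTop_nhds_zero_of_lt_one (by norm_num : (0:ℝ) ≤ 2⁻¹)
      (by norm_num : (2:ℝ)⁻¹ < 1) |>.congr (fun k => by rw [inv_pow])
  have hql : Tendsto q atTop (𝓝 c) := by
    refine tendsto_of_tendsto_of_tendsto_of_le_of_le (g := fun k => c - ((2:ℝ)^k)⁻¹)
      (h := fun _ => c) ?_ tendsto_const_nhds hlo hup
    simpa using tendsto_const_nhds.sub h2inv
  exact isClosed_nonneg.mem_of_tendsto (hql.smul_const x) (Filter.Eventually.of_forall hqx)

lemma aux_smul_mono {c : ℝ} {x y : E} (hc : 0 ≤ c) (hxy : x ≤ y) : c • x ≤ c • y := by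
  have := aux_smul_nonneg hc (sub_nonneg.mpr hxy)
  rw [smul_sub] at this
  exact sub_nonneg.mp this

lemma aux_smul_inf_zero {c : ℝ} {u v : E} (hc : 0 ≤ c) (hu : 0 ≤ u) (hv : 0 ≤ v)
    (huv : u ⊓ v = 0) : (c • u) ⊓ v = 0 := by
  obtain ⟨n, hn⟩ := exists_nat_ge c
  have h1 : c • u ≤ (n : ℕ) • u := by
    rw [← Nat.cast_smul_eq_nsmul ℝ]
    have := aux_smul_nonneg (sub_nonneg.mpr hn) hu
    rw [sub_smul] at this
    exact sub_nonneg.mp this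
  have h2 : (c • u) ⊓ v ≤ ((n:ℕ) • u) ⊓ v := inf_le_inf_right v h1
  rw [aux_nsmul_inf hu hv huv n] at h2
  exact le_antisymm h2 (le_inf (aux_smul_nonneg hc hu) hv)

-- D0
lemma aux_posPart_disjoint {a b : E} {c : ℝ} (hc : 0 < c) (h : a + c • b ≤ 0) :
    a⁺ ⊓ b⁺ = 0 := by
  have h1 : a ≤ c • b⁻ := by
    have ha : a ≤ c • (-b) := by
      calc a = (a + c • b) - c • b := by abel
        _ ≤ 0 - c • b := sub_le_sub_right h _
        _ = c • (-b) := by rw [zero_sub, smul_neg]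
    exact ha.trans (aux_smul_mono hc.le (neg_le_negPart b))
  have h2 : a⁺ ≤ c • b⁻ := by
    rw [posPart_def]
    exact sup_le h1 (aux_smul_nonneg hc.le (negPart_nonneg b))
  have h3 : a⁺ ⊓ b⁺ ≤ (c • b⁻) ⊓ b⁺ := inf_le_inf_right _ h2
  have h4 : (c • b⁻) ⊓ b⁺ = 0 := by
    refine aux_smul_inf_zero hc.le (negPart_nonneg b) (posPart_nonneg b) ?_
    rw [inf_comm]
    exact posPart_inf_negPart_eq_zero b
  rw [h4] at h3
  exact le_antisymm h3 (le_inf (posPart_nonneg a) (posPart_nonneg b))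

end AuxE2
section AuxE3
variable {E : Type*} [NormedAddCommGroup E] [Lattice E] [HasSolidNorm E]
    [IsOrderedAddMonoid E] [NormedSpace ℝ E]

lemma aux_inf_sum_zero {a : E} (ha : 0 ≤ a) {s : Finset ℕ} {w : ℕ → E}
    (hw : ∀ i ∈ s, 0 ≤ w i) (hdisj : ∀ i ∈ s, a ⊓ w i = 0) : a ⊓ (∑ i ∈ s, w i) = 0 := by
  induction s using Finset.induction with
  | empty => simpa using ha
  | insert _ _ hni ih =>
      rename_i j t
      rw [Finset.sum_insert hni]
      have hwj : 0 ≤ w j := hw j (Finset.mem_insert_self j t)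
      have hst : 0 ≤ ∑ i ∈ t, w i := Finset.sum_nonneg (fun i hi => hw i (Finset.mem_insert_of_mem hi))
      have h1 : (w j + ∑ i ∈ t, w i) ⊓ a ≤ (w j) ⊓ a + (∑ i ∈ t, w i) ⊓ a :=
        aux_inf_add_le hwj hst ha
      rw [inf_comm (w j) a] at h1
      rw [hdisj j (Finset.mem_insert_self j t)] at h1
      rw [inf_comm (∑ i ∈ t, w i) a] at h1
      rw [ih (fun i hi => hw i (Finset.mem_insert_of_mem hi))
        (fun i hi => hdisj i (Finset.mem_insert_of_mem hi))] at h1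
      rw [add_zero] at h1
      rw [inf_comm]
      exact le_antisymm h1 (le_inf (add_nonneg hwj hst) ha)

lemma aux_disj_sum_le {x : E} (hx : 0 ≤ x) {s : Finset ℕ} {w : ℕ → E}
    (hw : ∀ i ∈ s, 0 ≤ w i) (hle : ∀ i ∈ s, w i ≤ x)
    (hdisj : ∀ i ∈ s, ∀ j ∈ s, i ≠ j → w i ⊓ w j = 0) : ∑ i ∈ s, w i ≤ x := by
  induction s using Finset.induction with
  | empty => simpa using hx
  | insert _ _ hni ih =>
      rename_i j t
      rw [Finset.sum_insert hni]
      have hwj : 0 ≤ w j := hw j (Finset.mem_insert_self j t)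
      have hsum : ∑ i ∈ t, w i ≤ x :=
        ih (fun i hi => hw i (Finset.mem_insert_of_mem hi))
          (fun i hi => hle i (Finset.mem_insert_of_mem hi))
          (fun i hi j' hj' => hdisj i (Finset.mem_insert_of_mem hi) j' (Finset.mem_insert_of_mem hj'))
      have hd : w j ⊓ (∑ i ∈ t, w i) = 0 := by
        refine aux_inf_sum_zero hwj (fun i hi => hw i (Finset.mem_insert_of_mem hi)) ?_
        intro i hi
        exact hdisj j (Finset.mem_insert_self j t) i (Finset.mem_insert_of_mem hi)
          (fun h => hni (h ▸ hi))
      calc w j + ∑ i ∈ t, w i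
          = (w j ⊓ ∑ i ∈ t, w i) + (w j ⊔ ∑ i ∈ t, w i) := by rw [inf_add_sup]
        _ = w j ⊔ ∑ i ∈ t, w i := by rw [hd, zero_add]
        _ ≤ x := sup_le (hle j (Finset.mem_insert_self j t)) hsum

end AuxE3

section AuxD2
variable {E : Type*} [NormedAddCommGroup E] [Lattice E] [HasSolidNorm E]
    [IsOrderedAddMonoid E] [NormedSpace ℝ E] [CompleteSpace E]
    [Lattice (StrongDual ℝ E)] [HasSolidNorm (StrongDual ℝ E)]
    [CovariantClass (StrongDual ℝ E) (StrongDual ℝ E) (· + ·) (· ≤ ·)]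
lemma aux_dle (hE' : ∀ f : StrongDual ℝ E, 0 ≤ f ↔ ∀ x : E, 0 ≤ x → 0 ≤ f x)
    {f g : StrongDual ℝ E} : f ≤ g ↔ ∀ x : E, 0 ≤ x → f x ≤ g x := by
  rw [← sub_nonneg, hE' (g - f)]
  constructor
  · intro h x hx
    have := h x hx
    rw [ContinuousLinearMap.sub_apply] at this
    linarith
  · intro h x hx
    rw [ContinuousLinearMap.sub_apply]
    linarith [h x hx]

lemma aux_norm_posPart (x : E) : ‖x⁺‖ ≤ ‖x‖ := by
  have h1 : x⁺ ≤ |x| := sup_le (le_abs_self x) (abs_nonneg x)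
  have h2 : |x⁺| ≤ |x| := by rwa [abs_of_nonneg (posPart_nonneg x)]
  calc ‖x⁺‖ ≤ ‖|x|‖ := HasSolidNorm.solid (by rwa [abs_abs])
    _ = ‖x‖ := norm_abs_eq_norm x

lemma aux_norm_negPart (x : E) : ‖x⁻‖ ≤ ‖x‖ := by
  have h1 : x⁻ ≤ |x| := by
    rw [negPart_def, ← abs_neg]
    exact sup_le (le_abs_self (-x)) (abs_nonneg (-x))
  have h2 : |x⁻| ≤ |x| := by rwa [abs_of_nonneg (negPart_nonneg x)]
  calc ‖x⁻‖ ≤ ‖|x|‖ := HasSolidNorm.solid (by rwa [abs_abs])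
    _ = ‖x‖ := norm_abs_eq_norm x

lemma aux_extend {C : ℝ} (hC : 0 ≤ C) (p : E → ℝ)
    (hadd : ∀ x y : E, 0 ≤ x → 0 ≤ y → p (x + y) = p x + p y)
    (hbd : ∀ x : E, 0 ≤ x → |p x| ≤ C * ‖x‖) :
    ∃ G : StrongDual ℝ E, ∀ x : E, 0 ≤ x → G x = p x := by
  have hp0 : p 0 = 0 := by
    have := hadd 0 0 le_rfl le_rfl
    rw [add_zero] at this; linarith
  have key : ∀ x y : E, p (x + y)⁺ - p (x + y)⁻ = (p x⁺ - p x⁻) + (p y⁺ - p y⁻) := by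
    intro x y
    have hid : (x + y)⁺ + (x⁻ + y⁻) = (x + y)⁻ + (x⁺ + y⁺) := by
      have hx := posPart_sub_negPart x
      have hy := posPart_sub_negPart y
      have hxy := posPart_sub_negPart (x + y)
      have heq : (x+y)⁺ - (x+y)⁻ = (x⁺ - x⁻) + (y⁺ - y⁻) := by rw [hx, hy, hxy]
      have h2 : (x + y)⁺ + (x⁻ + y⁻) - ((x + y)⁻ + (x⁺ + y⁺))
          = ((x+y)⁺ - (x+y)⁻) - ((x⁺ - x⁻) + (y⁺ - y⁻)) := by abel
      rw [heq, sub_self] at h2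
      exact sub_eq_zero.mp h2
    have happ := congrArg p hid
    rw [hadd _ _ (posPart_nonneg _) (add_nonneg (negPart_nonneg x) (negPart_nonneg y)),
        hadd _ _ (negPart_nonneg x) (negPart_nonneg y),
        hadd _ _ (negPart_nonneg _) (add_nonneg (posPart_nonneg x) (posPart_nonneg y)),
        hadd _ _ (posPart_nonneg x) (posPart_nonneg y)] at happ
    linarith
  set F : E →+ ℝ := AddMonoidHom.mk' (fun x => p x⁺ - p x⁻) (fun x y => key x y) with hF
  have hFb : ∀ x : E, |F x| ≤ (2*C) * ‖x‖ := by
    intro x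
    have h1 : |p x⁺| ≤ C * ‖x‖ := (hbd _ (posPart_nonneg x)).trans
      (mul_le_mul_of_nonneg_left (aux_norm_posPart x) hC)
    have h2 : |p x⁻| ≤ C * ‖x‖ := (hbd _ (negPart_nonneg x)).trans
      (mul_le_mul_of_nonneg_left (aux_norm_negPart x) hC)
    have h3 : |F x| ≤ |p x⁺| + |p x⁻| := by
      have : F x = p x⁺ - p x⁻ := rfl
      rw [this]
      exact abs_sub _ _
    linarith
  have lip : LipschitzWith (Real.toNNReal (2*C)) F := by
    apply LipschitzWith.of_dist_le_mul
    intro x y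
    rw [dist_eq_norm, dist_eq_norm, ← map_sub]
    have := hFb (x - y)
    rw [Real.norm_eq_abs]
    calc |F (x - y)| ≤ (2*C) * ‖x - y‖ := this
      _ ≤ (Real.toNNReal (2*C) : ℝ) * ‖x - y‖ := by
          apply mul_le_mul_of_nonneg_right _ (norm_nonneg _)
          rw [Real.coe_toNNReal']
          exact le_max_left _ _
  refine ⟨F.toRealLinearMap lip.continuous, ?_⟩
  intro x hx
  have h1 : (F.toRealLinearMap lip.continuous) x = F x := rfl
  rw [h1]
  have h2 : F x = p x⁺ - p x⁻ := rfl
  rw [h2, posPart_eq_self.mpr hx, negPart_eq_zero.mpr hx, hp0, sub_zero]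

lemma nsmul_apply (c : StrongDual ℝ E) (k : ℕ) (z : E) : (k • c) z = k * (c z) := by
  induction k with
  | zero => simp
  | succ j ih => rw [succ_nsmul, ContinuousLinearMap.add_apply, ih]; push_cast; ring


end AuxD2

lemma stmt5_forward {E : Type*} [NormedAddCommGroup E] [Lattice E] [HasSolidNorm E]
    [IsOrderedAddMonoid E] [NormedSpace ℝ E] [CompleteSpace E]
    [Lattice (StrongDual ℝ E)] [HasSolidNorm (StrongDual ℝ E)]
    [CovariantClass (StrongDual ℝ E) (StrongDual ℝ E) (· + ·) (· ≤ ·)]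
    (hE' : ∀ f : StrongDual ℝ E, 0 ≤ f ↔ ∀ x : E, 0 ≤ x → 0 ≤ f x)
    (hOC : OrderContinuousNorm (StrongDual ℝ E)) :
    ∀ f : ℕ → StrongDual ℝ E, OrdBddSeq f →
      ∀ x : ℕ → E, (∀ n, ‖x n‖ ≤ 1) → DisjSeq x →
        Tendsto (fun n => f n (x n)) atTop (𝓝 0) := by
  rintro f ⟨a, b, hab⟩ x hx1 hxd
  set g : StrongDual ℝ E := |a| ⊔ |b| with hgdef
  have hg0 : (0: StrongDual ℝ E) ≤ g := le_trans (abs_nonneg a) le_sup_left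
  have hgx : ∀ z : E, 0 ≤ z → 0 ≤ g z := (hE' g).mp hg0
  have hgmono : ∀ {y z : E}, y ≤ z → g y ≤ g z := by
    intro y z hyz
    have := hgx (z - y) (sub_nonneg.mpr hyz)
    rw [map_sub] at this; linarith
  -- the disjoint positive sequence
  set v : ℕ → E := fun n => |x n| with hvdef
  have hv0 : ∀ n, 0 ≤ v n := fun n => abs_nonneg (x n)
  have hv1 : ∀ n, ‖v n‖ ≤ 1 := fun n => le_trans (le_of_eq (norm_abs_eq_norm (x n))) (hx1 n)
  have hvd : ∀ m n, m ≠ n → v m ⊓ v n = 0 := fun m n h => hxd m n h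
  -- reduction : enough to show g (v n) → 0
  have hred : ∀ n, ‖f n (x n)‖ ≤ g (v n) := by
    intro n
    have hfb : ∀ w : E, 0 ≤ w → |f n w| ≤ g w := by
      intro w hw
      have h1 : f n w ≤ b w := (aux_dle hE').mp (hab n).2 w hw
      have h2 : a w ≤ f n w := (aux_dle hE').mp (hab n).1 w hw
      have hbg : b w ≤ g w := (aux_dle hE').mp ((le_abs_self b).trans le_sup_right) w hw
      have hag : (-a) w ≤ g w := (aux_dle hE').mp ((neg_le_abs a).trans le_sup_left) w hw
      rw [ContinuousLinearMap.neg_apply] at hag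
      rw [abs_le]; constructor <;> linarith
    have hx' : f n (x n) = f n ((x n)⁺) - f n ((x n)⁻) := by
      rw [← map_sub, posPart_sub_negPart]
    have h1 := hfb _ (posPart_nonneg (x n))
    have h2 := hfb _ (negPart_nonneg (x n))
    have h3 : g ((x n)⁺) + g ((x n)⁻) = g (v n) := by
      rw [← map_add, posPart_add_negPart]
    rw [Real.norm_eq_abs, hx', abs_le]
    rw [abs_le] at h1 h2
    constructor <;> linarith [h1.1, h1.2, h2.1, h2.2]
  -- component functionals
  have hcomp : ∀ n : ℕ, ∃ G : StrongDual ℝ E,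
      ∀ z : E, 0 ≤ z → G z = ⨆ k : ℕ, g (z ⊓ k • v n) := by
    intro n
    set p : E → ℝ := fun z => ⨆ k : ℕ, g (z ⊓ k • v n) with hpdef
    have hterm : ∀ z : E, 0 ≤ z → ∀ k : ℕ, 0 ≤ g (z ⊓ k • v n) ∧ g (z ⊓ k • v n) ≤ g z := by
      intro z hz k
      exact ⟨hgx _ (le_inf hz (nsmul_nonneg (hv0 n) k)), hgmono inf_le_left⟩
    have hbddA : ∀ z : E, 0 ≤ z → BddAbove (Set.range fun k : ℕ => g (z ⊓ k • v n)) := by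
      intro z hz
      exact ⟨g z, by rintro r ⟨k, rfl⟩; exact (hterm z hz k).2⟩
    have hmonoK : ∀ z : E, Monotone (fun k : ℕ => g (z ⊓ k • v n)) := by
      intro z k l hkl
      exact hgmono (inf_le_inf_left z (nsmul_le_nsmul_left (hv0 n) hkl))
    have htdsto : ∀ z : E, 0 ≤ z →
        Tendsto (fun k : ℕ => g (z ⊓ k • v n)) atTop (𝓝 (p z)) := by
      intro z hz
      exact tendsto_atTop_ciSup (hmonoK z) (hbddA z hz)
    have hadd : ∀ z w : E, 0 ≤ z → 0 ≤ w → p (z + w) = p z + p w := by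
      intro z w hz hw
      have hzw : (0:E) ≤ z + w := add_nonneg hz hw
      refine le_antisymm ?_ ?_
      · refine le_of_tendsto (htdsto _ hzw) (Filter.Eventually.of_forall fun k => ?_)
        have hsplit : (z + w) ⊓ (k • v n) ≤ z ⊓ (k • v n) + w ⊓ (k • v n) :=
          aux_inf_add_le hz hw (nsmul_nonneg (hv0 n) k)
        calc g ((z + w) ⊓ k • v n) ≤ g (z ⊓ k • v n + w ⊓ k • v n) := hgmono hsplit
          _ = g (z ⊓ k • v n) + g (w ⊓ k • v n) := map_add g _ _
          _ ≤ p z + p w := add_le_add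
              (le_ciSup (hbddA z hz) k) (le_ciSup (hbddA w hw) k)
      · have : Tendsto (fun k : ℕ => g (z ⊓ k • v n) + g (w ⊓ k • v n)) atTop
            (𝓝 (p z + p w)) := (htdsto z hz).add (htdsto w hw)
        refine le_of_tendsto this (Filter.Eventually.of_forall fun k => ?_)
        have hle : z ⊓ k • v n + w ⊓ k • v n ≤ (z + w) ⊓ ((2 * k) • v n) := by
          refine le_inf (add_le_add inf_le_left inf_le_left) ?_
          rw [two_mul, add_nsmul]
          exact add_le_add inf_le_right inf_le_right
        calc g (z ⊓ k • v n) + g (w ⊓ k • v n) = g (z ⊓ k • v n + w ⊓ k • v n) :=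
              (map_add g _ _).symm
          _ ≤ g ((z + w) ⊓ (2 * k) • v n) := hgmono hle
          _ ≤ p (z + w) := le_ciSup (hbddA _ hzw) (2 * k)
    have hp0 : ∀ z : E, 0 ≤ z → 0 ≤ p z := by
      intro z hz
      have h00 : g (z ⊓ (0 : ℕ) • v n) = 0 := by
        rw [zero_smul, inf_eq_right.mpr hz, map_zero]
      calc (0:ℝ) = g (z ⊓ (0 : ℕ) • v n) := h00.symm
        _ ≤ p z := le_ciSup (hbddA z hz) 0
    have hple : ∀ z : E, 0 ≤ z → p z ≤ g z := by
      intro z hz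
      exact ciSup_le fun k => (hterm z hz k).2
    have hbd : ∀ z : E, 0 ≤ z → |p z| ≤ ‖g‖ * ‖z‖ := by
      intro z hz
      rw [abs_of_nonneg (hp0 z hz)]
      calc p z ≤ g z := hple z hz
        _ ≤ ‖g z‖ := le_abs_self _
        _ ≤ ‖g‖ * ‖z‖ := ContinuousLinearMap.le_opNorm g z
    exact (aux_extend (norm_nonneg g) p hadd hbd).imp (fun G hG => hG)
  choose G hG using hcomp
  -- basic facts about G
  have hGpos : ∀ n, ∀ z : E, 0 ≤ z → 0 ≤ G n z := by
    intro n z hz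
    rw [hG n z hz]
    have h00 : g (z ⊓ (0 : ℕ) • v n) = 0 := by
      rw [zero_smul, inf_eq_right.mpr hz, map_zero]
    have hbddA : BddAbove (Set.range fun k : ℕ => g (z ⊓ k • v n)) :=
      ⟨g z, by rintro r ⟨k, rfl⟩; exact hgmono inf_le_left⟩
    calc (0:ℝ) = g (z ⊓ (0 : ℕ) • v n) := h00.symm
      _ ≤ _ := le_ciSup hbddA 0
  have hGv : ∀ n, G n (v n) = g (v n) := by
    intro n
    rw [hG n (v n) (hv0 n)]
    have hbddA : BddAbove (Set.range fun k : ℕ => g (v n ⊓ k • v n)) :=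
      ⟨g (v n), by rintro r ⟨k, rfl⟩; exact hgmono inf_le_left⟩
    refine le_antisymm (ciSup_le fun k => hgmono inf_le_left) ?_
    have h1 : g (v n ⊓ (1 : ℕ) • v n) = g (v n) := by rw [one_nsmul, inf_idem]
    calc g (v n) = g (v n ⊓ (1 : ℕ) • v n) := h1.symm
      _ ≤ _ := le_ciSup hbddA 1
  -- partial sums are dominated by g
  set xS : Finset ℕ → StrongDual ℝ E := fun S => ∑ n ∈ S, G n with hxSdef
  have hxSapply : ∀ S : Finset ℕ, ∀ z : E, xS S z = ∑ n ∈ S, G n z := by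
    intro S z
    simp [hxSdef, ContinuousLinearMap.sum_apply]
  have hxSle : ∀ S : Finset ℕ, xS S ≤ g := by
    intro S
    rw [aux_dle hE']
    intro z hz
    rw [hxSapply]
    -- each G n z is a sup; pass to the limit of the finite sum
    have hlim : ∀ n, Tendsto (fun k : ℕ => g (z ⊓ k • v n)) atTop (𝓝 (G n z)) := by
      intro n
      rw [hG n z hz]
      refine tendsto_atTop_ciSup ?_ ⟨g z, by rintro r ⟨k, rfl⟩; exact hgmono inf_le_left⟩
      intro k l hkl
      exact hgmono (inf_le_inf_left z (nsmul_le_nsmul_left (hv0 n) hkl))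
    have hsumlim : Tendsto (fun k : ℕ => ∑ n ∈ S, g (z ⊓ k • v n)) atTop
        (𝓝 (∑ n ∈ S, G n z)) := tendsto_finset_sum S (fun n _ => hlim n)
    refine le_of_tendsto hsumlim (Filter.Eventually.of_forall fun k => ?_)
    have hsum_eq : ∑ n ∈ S, g (z ⊓ k • v n) = g (∑ n ∈ S, z ⊓ k • v n) :=
      (map_sum g _ S).symm
    rw [hsum_eq]
    refine hgmono (aux_disj_sum_le hz ?_ ?_ ?_)
    · intro i _; exact le_inf hz (nsmul_nonneg (hv0 i) k)
    · intro i _; exact inf_le_left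
    · intro i _ j _ hij
      have hd : (k • v i) ⊓ (k • v j) = 0 := aux_nsmul_inf' (hv0 i) (hv0 j) (hvd i j hij) k k
      have hle1 : (z ⊓ k • v i) ⊓ (z ⊓ k • v j) ≤ (k • v i) ⊓ (k • v j) :=
        inf_le_inf inf_le_right inf_le_right
      rw [hd] at hle1
      refine le_antisymm hle1 (le_inf (le_inf hz (nsmul_nonneg (hv0 i) k))
        (le_inf hz (nsmul_nonneg (hv0 j) k)))
  -- the supremum functional of the partial sums
  have hsup : ∃ sF : StrongDual ℝ E, (∀ S : Finset ℕ, xS S ≤ sF) ∧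
      (∀ b : StrongDual ℝ E, (∀ S : Finset ℕ, xS S ≤ b) → sF ≤ b) := by
    classical
    set p : E → ℝ := fun z => ⨆ S : Finset ℕ, xS S z with hpdef
    have hterm0 : ∀ z : E, 0 ≤ z → ∀ S : Finset ℕ, 0 ≤ xS S z := by
      intro z hz S
      rw [hxSapply]
      exact Finset.sum_nonneg fun i _ => hGpos i z hz
    have htermg : ∀ z : E, 0 ≤ z → ∀ S : Finset ℕ, xS S z ≤ g z := by
      intro z hz S
      exact (aux_dle hE').mp (hxSle S) z hz
    have hbddA : ∀ z : E, 0 ≤ z → BddAbove (Set.range fun S : Finset ℕ => xS S z) := by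
      intro z hz
      exact ⟨g z, by rintro r ⟨S, rfl⟩; exact htermg z hz S⟩
    have hmonoS : ∀ z : E, 0 ≤ z → Monotone (fun S : Finset ℕ => xS S z) := by
      intro z hz S T hST
      simp only
      rw [hxSapply, hxSapply]
      exact Finset.sum_le_sum_of_subset_of_nonneg hST (fun i _ _ => hGpos i z hz)
    have htdsto : ∀ z : E, 0 ≤ z →
        Tendsto (fun S : Finset ℕ => xS S z) atTop (𝓝 (p z)) := by
      intro z hz
      exact tendsto_atTop_ciSup (hmonoS z hz) (hbddA z hz)
    have hadd : ∀ z w : E, 0 ≤ z → 0 ≤ w → p (z + w) = p z + p w := by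
      intro z w hz hw
      have hzw : (0:E) ≤ z + w := add_nonneg hz hw
      have h1 : Tendsto (fun S : Finset ℕ => xS S (z + w)) atTop (𝓝 (p (z+w))) :=
        htdsto _ hzw
      have h2 : Tendsto (fun S : Finset ℕ => xS S (z + w)) atTop (𝓝 (p z + p w)) := by
        have := (htdsto z hz).add (htdsto w hw)
        refine this.congr fun S => ?_
        rw [← map_add]
      exact tendsto_nhds_unique h1 h2
    have hbd : ∀ z : E, 0 ≤ z → |p z| ≤ ‖g‖ * ‖z‖ := by
      intro z hz
      have h0 : 0 ≤ p z := le_ciSup_of_le (hbddA z hz) ∅ (hterm0 z hz ∅)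
      rw [abs_of_nonneg h0]
      refine (ciSup_le fun S => (htermg z hz S)).trans ?_
      exact (le_abs_self _).trans (ContinuousLinearMap.le_opNorm g z)
    obtain ⟨sF, hsF⟩ := aux_extend (norm_nonneg g) p hadd hbd
    refine ⟨sF, ?_, ?_⟩
    · intro S
      rw [aux_dle hE']
      intro z hz
      rw [hsF z hz]
      exact le_ciSup (by exact ⟨g z, by rintro r ⟨T, rfl⟩; exact htermg z hz T⟩) S
    · intro b hb
      rw [aux_dle hE']
      intro z hz
      rw [hsF z hz]
      exact ciSup_le fun S => (aux_dle hE').mp (hb S) z hz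
  obtain ⟨sF, hsF1, hsF2⟩ := hsup
  -- the net indexed by finite sets
  have hGnorm : Tendsto (fun n => ‖G n‖) atTop (𝓝 0) := by
    classical
    set W : ULift.{_} (Finset ℕ) → StrongDual ℝ E := fun S => sF - xS S.down with hWdef
    haveI : Nonempty (ULift.{_} (Finset ℕ)) := ⟨⟨∅⟩⟩
    haveI hdir : IsDirected (ULift.{_} (Finset ℕ)) (· ≤ ·) := by
      constructor
      intro S T
      exact ⟨⟨S.down ∪ T.down⟩, Finset.subset_union_left, Finset.subset_union_right⟩
    have hWanti : Antitone W := by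
      intro S T hST
      rw [hWdef]
      simp only []
      rw [aux_dle hE']
      intro z hz
      rw [ContinuousLinearMap.sub_apply, ContinuousLinearMap.sub_apply]
      have h2 : xS S.down z ≤ xS T.down z := by
        rw [hxSapply, hxSapply]
        exact Finset.sum_le_sum_of_subset_of_nonneg hST (fun i _ _ => hGpos i z hz)
      linarith
    have hWpos : ∀ S, 0 ≤ W S := fun S => sub_nonneg.mpr (hsF1 S.down)
    have hglb : IsGLB (Set.range W) 0 := by
      constructor
      · rintro w ⟨S, rfl⟩; exact hWpos S
      · intro c hc
        have hb : ∀ S : Finset ℕ, xS S ≤ sF - c := by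
          intro S
          have h1 : c ≤ sF - xS S := hc ⟨⟨S⟩, rfl⟩
          have h2 := add_le_add h1 (le_refl (xS S))
          rw [sub_add_cancel] at h2
          calc xS S = c + xS S - c := by abel
            _ ≤ sF - c := by
                have := sub_le_sub_right h2 c
                calc c + xS S - c = c + xS S - c := rfl
                  _ ≤ sF - c := this
        have h3 : sF ≤ sF - c := hsF2 _ hb
        have h4 := add_le_add h3 (le_refl c)
        rw [sub_add_cancel] at h4
        calc c = sF + c - sF := by abel
          _ ≤ sF - sF := sub_le_sub_right h4 sF
          _ = 0 := by abel
    have htd := hOC (ULift.{_} (Finset ℕ)) W hWanti hglb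
    rw [Metric.tendsto_atTop]
    intro ε hε
    have hev : {q : ULift.{_} (Finset ℕ) | ‖W q‖ < ε} ∈ (atTop : Filter (ULift.{_} (Finset ℕ))) := by
      have := Metric.tendsto_nhds.mp htd ε hε
      refine this.mono fun q hq => ?_
      rwa [Real.dist_eq, sub_zero, abs_of_nonneg (norm_nonneg _)] at hq
    rw [mem_atTop_sets] at hev
    obtain ⟨⟨S₀⟩, hS₀⟩ := hev
    refine ⟨S₀.sup id + 1, fun n hn => ?_⟩
    have hnS₀ : n ∉ S₀ := by
      intro hmem
      have : n ≤ S₀.sup id := Finset.le_sup (f := id) hmem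
      omega
    have hWb : ‖W ⟨S₀⟩‖ < ε := hS₀ ⟨S₀⟩ le_rfl
    have hGle : G n ≤ W ⟨S₀⟩ := by
      have h1 : xS (insert n S₀) ≤ sF := hsF1 _
      have h2 : xS (insert n S₀) = G n + xS S₀ := by
        rw [hxSdef]; exact Finset.sum_insert hnS₀
      rw [h2] at h1
      have := sub_le_sub_right h1 (xS S₀)
      calc G n = G n + xS S₀ - xS S₀ := by abel
        _ ≤ sF - xS S₀ := this
    have hGn0 : (0: StrongDual ℝ E) ≤ G n := (hE' (G n)).mpr (hGpos n)
    have habs : |G n| ≤ |W ⟨S₀⟩| := by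
      rw [abs_of_nonneg hGn0, abs_of_nonneg (hWpos ⟨S₀⟩)]
      exact hGle
    have := HasSolidNorm.solid habs
    rw [Real.dist_eq, sub_zero, abs_of_nonneg (norm_nonneg _)]
    exact lt_of_le_of_lt this hWb
  have hgv : Tendsto (fun n => g (v n)) atTop (𝓝 0) := by
    refine squeeze_zero (fun n => hgx _ (hv0 n)) (fun n => ?_) hGnorm
    calc g (v n) = G n (v n) := (hGv n).symm
      _ ≤ |G n (v n)| := le_abs_self _
      _ = ‖(G n) (v n)‖ := (Real.norm_eq_abs _).symm
      _ ≤ ‖G n‖ * ‖v n‖ := ContinuousLinearMap.le_opNorm _ _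
      _ ≤ ‖G n‖ * 1 := by
          exact mul_le_mul_of_nonneg_left (hv1 n) (norm_nonneg _)
      _ = ‖G n‖ := mul_one _
  exact squeeze_zero_norm hred hgv

lemma stmt5_backward {E : Type*} [NormedAddCommGroup E] [Lattice E] [HasSolidNorm E]
    [IsOrderedAddMonoid E] [NormedSpace ℝ E] [CompleteSpace E]
    [Lattice (StrongDual ℝ E)] [HasSolidNorm (StrongDual ℝ E)]
    [CovariantClass (StrongDual ℝ E) (StrongDual ℝ E) (· + ·) (· ≤ ·)]
    (hE' : ∀ f : StrongDual ℝ E, 0 ≤ f ↔ ∀ x : E, 0 ≤ x → 0 ≤ f x)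
    (hRHS : ∀ f : ℕ → StrongDual ℝ E, OrdBddSeq f →
      ∀ x : ℕ → E, (∀ n, ‖x n‖ ≤ 1) → DisjSeq x →
        Tendsto (fun n => f n (x n)) atTop (𝓝 0)) :
    OrderContinuousNorm (StrongDual ℝ E) := by
  intro ι _ _ _ F hanti hglb
  haveI hNB : (atTop : Filter ι).NeBot := atTop_neBot_iff.mpr ⟨inferInstance, inferInstance⟩
  have hF0 : ∀ i, (0 : StrongDual ℝ E) ≤ F i := fun i => hglb.1 ⟨i, rfl⟩
  have hFx : ∀ i, ∀ z : E, 0 ≤ z → 0 ≤ F i z := fun i => (hE' (F i)).mp (hF0 i)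
  have hmono_pt : ∀ {i j : ι}, i ≤ j → ∀ z : E, 0 ≤ z → F j z ≤ F i z := by
    intro i j hij z hz
    exact (aux_dle hE').mp (hanti hij) z hz
  have hFmono : ∀ i, ∀ {z w : E}, z ≤ w → F i z ≤ F i w := by
    intro i z w hzw
    have := hFx i (w - z) (sub_nonneg.mpr hzw)
    rw [map_sub] at this; linarith
  have hnorm_anti : Antitone (fun i => ‖F i‖) := by
    intro i j hij
    have habs : |F j| ≤ |F i| := by
      rw [abs_of_nonneg (hF0 j), abs_of_nonneg (hF0 i)]
      exact hanti hij
    exact HasSolidNorm.solid habs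
  have hbdd : BddBelow (Set.range fun i => ‖F i‖) := ⟨0, by rintro r ⟨i, rfl⟩; exact norm_nonneg _⟩
  have htL : Tendsto (fun i => ‖F i‖) atTop (𝓝 (⨅ i, ‖F i‖)) :=
    tendsto_atTop_ciInf hnorm_anti hbdd
  set L := ⨅ i, ‖F i‖ with hLdef
  have hL0 : 0 ≤ L := le_ciInf fun i => norm_nonneg _
  rcases eq_or_lt_of_le hL0 with hL | hL
  · rw [← hL] at htL; exact htL
  exfalso
  set ε := L with hεdef
  have hεle : ∀ i, ε ≤ ‖F i‖ := fun i => ciInf_le hbdd i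
  -- pointwise convergence to 0 on the positive cone
  have hptws : ∀ z : E, 0 ≤ z → Tendsto (fun i => F i z) atTop (𝓝 0) := by
    have i₀ : ι := Classical.arbitrary ι
    set p : E → ℝ := fun z => ⨅ i, F i z with hpdef
    have hbddB : ∀ z : E, 0 ≤ z → BddBelow (Set.range fun i => F i z) := by
      intro z hz
      exact ⟨0, by rintro r ⟨i, rfl⟩; exact hFx i z hz⟩
    have hzanti : ∀ z : E, 0 ≤ z → Antitone (fun i => F i z) := by
      intro z hz i j hij
      exact hmono_pt hij z hz
    have htdsto : ∀ z : E, 0 ≤ z → Tendsto (fun i => F i z) atTop (𝓝 (p z)) := by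
      intro z hz
      exact tendsto_atTop_ciInf (hzanti z hz) (hbddB z hz)
    have hp0 : ∀ z : E, 0 ≤ z → 0 ≤ p z := by
      intro z hz
      exact le_ciInf fun i => hFx i z hz
    have hadd : ∀ z w : E, 0 ≤ z → 0 ≤ w → p (z + w) = p z + p w := by
      intro z w hz hw
      have h1 : Tendsto (fun i => F i (z + w)) atTop (𝓝 (p (z + w))) :=
        htdsto _ (add_nonneg hz hw)
      have h2 : Tendsto (fun i => F i (z + w)) atTop (𝓝 (p z + p w)) := by
        have := (htdsto z hz).add (htdsto w hw)
        refine this.congr fun i => ?_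
        rw [← map_add]
      exact tendsto_nhds_unique h1 h2
    have hbd : ∀ z : E, 0 ≤ z → |p z| ≤ ‖F i₀‖ * ‖z‖ := by
      intro z hz
      rw [abs_of_nonneg (hp0 z hz)]
      calc p z ≤ F i₀ z := ciInf_le (hbddB z hz) i₀
        _ ≤ ‖F i₀ z‖ := le_abs_self _
        _ ≤ ‖F i₀‖ * ‖z‖ := ContinuousLinearMap.le_opNorm _ _
    obtain ⟨h, hh⟩ := aux_extend (norm_nonneg (F i₀)) p hadd hbd
    have hlow : ∀ j, h ≤ F j := by
      intro j
      rw [aux_dle hE']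
      intro z hz
      rw [hh z hz]
      exact ciInf_le (hbddB z hz) j
    have hneg : h ≤ 0 := hglb.2 (by rintro w ⟨j, rfl⟩; exact hlow j)
    intro z hz
    have h1 : p z ≤ 0 := by
      have := (aux_dle hE').mp hneg z hz
      rw [ContinuousLinearMap.zero_apply] at this
      rwa [hh z hz] at this
    have h2 : p z = 0 := le_antisymm h1 (hp0 z hz)
    rw [← h2]
    exact htdsto z hz
  -- choose positive almost-norming elements
  have hu : ∀ i : ι, ∃ uu : E, 0 ≤ uu ∧ ‖uu‖ ≤ 1 ∧ (3/4) * ε ≤ F i uu := by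
    intro i
    have h34 : (3/4) * ε < ‖F i‖ := lt_of_lt_of_le (by nlinarith) (hεle i)
    obtain ⟨z, hz1, hz2⟩ := ContinuousLinearMap.exists_lt_apply_of_lt_opNorm (F i) h34
    refine ⟨|z|, abs_nonneg z, le_of_eq_of_le (norm_abs_eq_norm z) hz1.le, ?_⟩
    have hsplit : F i |z| = F i (z⁺) + F i (z⁻) := by
      rw [← map_add, posPart_add_negPart]
    have habs : ‖F i z‖ ≤ F i |z| := by
      rw [Real.norm_eq_abs]
      have hz' : F i z = F i (z⁺) - F i (z⁻) := by rw [← map_sub, posPart_sub_negPart]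
      rw [hz']
      refine (abs_sub _ _).trans ?_
      rw [abs_of_nonneg (hFx i _ (posPart_nonneg z)), abs_of_nonneg (hFx i _ (negPart_nonneg z)),
        hsplit]
    linarith [hz2.le.trans habs]
  choose u hu0 hu1 hu3 using hu
  -- recursive construction of indices
  have hpick : ∀ (n : ℕ) (i : ι) (s : E), ∃ j : ι, i ≤ j ∧
      (0 ≤ s → F j s ≤ ε / (16 * 8 ^ (n+1))) := by
    intro n i s
    by_cases hs : 0 ≤ s
    · have hδ : 0 < ε / (16 * 8 ^ (n+1)) := by positivity
      have h1 : ∀ᶠ j in (atTop : Filter ι), F j s ≤ ε / (16 * 8 ^ (n+1)) := by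
        have := hptws s hs
        have h2 := this.eventually (eventually_le_nhds hδ)
        exact h2
      have h3 : ∀ᶠ j in (atTop : Filter ι), i ≤ j := eventually_ge_atTop i
      obtain ⟨j, hj1, hj2⟩ := (h3.and h1).exists
      exact ⟨j, hj1, fun _ => hj2⟩
    · obtain ⟨j, hj, _⟩ := IsDirected.directed (r := (· ≤ ·)) i i
      exact ⟨j, hj, fun hs' => absurd hs' hs⟩
  choose pick hpick1 hpick2 using hpick
  have i₀ : ι := Classical.arbitrary ι
  set seq : ℕ → ι × E := fun n => Nat.rec (i₀, 0)
    (fun m p => (pick m p.1 (p.2 + u p.1), p.2 + u p.1)) n with hseqdef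
  set β : ℕ → ι := fun n => (seq n).1 with hβdef
  set T : ℕ → E := fun n => (seq n).2 with hTdef
  have hseq_succ : ∀ n, seq (n+1) = (pick n (β n) (T n + u (β n)), T n + u (β n)) := by
    intro n; rfl
  have hT0 : T 0 = 0 := rfl
  have hTsucc : ∀ n, T (n+1) = T n + u (β n) := by
    intro n; rfl
  have hβsucc : ∀ n, β (n+1) = pick n (β n) (T n + u (β n)) := by
    intro n; rfl
  have hTnn : ∀ n, 0 ≤ T n := by
    intro n
    induction n with
    | zero => rw [hT0]
    | succ m ih => rw [hTsucc]; exact add_nonneg ih (hu0 _)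
  have hβmono : Monotone β := by
    refine monotone_nat_of_le_succ fun n => ?_
    rw [hβsucc]
    exact hpick1 n (β n) (T n + u (β n))
  have hTsum : ∀ n, T n = ∑ i ∈ Finset.range n, u (β i) := by
    intro n
    induction n with
    | zero => simp [hT0]
    | succ m ih => rw [hTsucc, Finset.sum_range_succ, ih]
  have hsmall : ∀ n, F (β (n+1)) (T (n+1)) ≤ ε / (16 * 8 ^ (n+1)) := by
    intro n
    rw [hβsucc, hTsucc]
    exact hpick2 n (β n) (T n + u (β n)) (by rw [← hTsucc]; exact hTnn (n+1))
  -- the dominating element w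
  have hsummable : Summable (fun k : ℕ => ((1/2:ℝ)) ^ k • u (β k)) := by
    refine Summable.of_norm_bounded (g := fun k => (1/2:ℝ)^k) summable_geometric_two fun k => ?_
    rw [norm_smul, Real.norm_eq_abs, abs_of_nonneg (by positivity : (0:ℝ) ≤ (1/2:ℝ)^k)]
    calc (1/2:ℝ)^k * ‖u (β k)‖ ≤ (1/2:ℝ)^k * 1 :=
        mul_le_mul_of_nonneg_left (hu1 _) (by positivity)
      _ = (1/2:ℝ)^k := mul_one _
  set w : E := ∑' k : ℕ, ((1/2:ℝ)) ^ k • u (β k) with hwdef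
  have hw0 : 0 ≤ w := tsum_nonneg fun k => aux_smul_nonneg (by positivity) (hu0 _)
  have huw : ∀ k : ℕ, u (β k) ≤ (2:ℝ)^k • w := by
    intro k
    have h1 : ((1/2:ℝ))^k • u (β k) ≤ w :=
      Summable.le_tsum hsummable k fun j _ => aux_smul_nonneg (by positivity) (hu0 _)
    have h2 := aux_smul_mono (by positivity : (0:ℝ) ≤ (2:ℝ)^k) h1
    rw [smul_smul] at h2
    have h3 : (2:ℝ)^k * (1/2:ℝ)^k = 1 := by
      rw [← mul_pow]; norm_num
    rwa [h3, one_smul] at h2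
  -- the disjoint sequence
  set y : ℕ → E := fun n => (u (β n) - (8:ℝ)^n • T n - (1/4:ℝ)^n • w)⁺ with hydef
  have hy0 : ∀ n, 0 ≤ y n := fun n => posPart_nonneg _
  have hyle : ∀ n, y n ≤ u (β n) := by
    intro n
    rw [hydef]
    refine sup_le ?_ (hu0 _)
    have h1 : (0:E) ≤ (8:ℝ)^n • T n + (1/4:ℝ)^n • w :=
      add_nonneg (aux_smul_nonneg (by positivity) (hTnn n)) (aux_smul_nonneg (by positivity) hw0)
    calc u (β n) - (8:ℝ)^n • T n - (1/4:ℝ)^n • w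
        = u (β n) - ((8:ℝ)^n • T n + (1/4:ℝ)^n • w) := by abel
      _ ≤ u (β n) - 0 := by exact sub_le_sub_left h1 _
      _ = u (β n) := sub_zero _
  have hy1 : ∀ n, ‖y n‖ ≤ 1 := by
    intro n
    have habs' : |y n| ≤ |u (β n)| := by
      rw [abs_of_nonneg (hy0 n), abs_of_nonneg (hu0 _)]
      exact hyle n
    exact le_trans (HasSolidNorm.solid habs') (hu1 _)
  have hydisj : DisjSeq y := by
    have key : ∀ m n : ℕ, n < m → y m ⊓ y n = 0 := by
      intro m n hnm
      have hdisj0 : (u (β m) - (8:ℝ)^m • T m - (1/4:ℝ)^m • w)⁺ ⊓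
          (u (β n) - (1/4:ℝ)^n • w)⁺ = 0 := by
        refine aux_posPart_disjoint (c := (8:ℝ)^m) (by positivity) ?_
        -- a + 8^m • b ≤ 0
        have husum : u (β n) ≤ T m := by
          rw [hTsum m]
          exact Finset.single_le_sum (f := fun i => u (β i))
            (fun i _ => hu0 _) (Finset.mem_range.mpr hnm)
        have h1 : (8:ℝ)^m • u (β n) ≤ (8:ℝ)^m • T m :=
          aux_smul_mono (by positivity) husum
        have hcoef : (2:ℝ)^m ≤ (8:ℝ)^m * (1/4:ℝ)^n := by
          obtain ⟨k, rfl⟩ : ∃ k, m = k + 1 := ⟨m - 1, by omega⟩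
          have h4 : ((1/4:ℝ))^k ≤ ((1/4:ℝ))^n := by
            apply pow_le_pow_of_le_one (by norm_num) (by norm_num)
            omega
          have h6 : (8:ℝ)^k * (1/4:ℝ)^k = 2^k := by rw [← mul_pow]; norm_num
          have h7 : (8:ℝ)^(k+1) * (1/4:ℝ)^k = 8 * 2^k := by
            rw [pow_succ]
            calc (8:ℝ)^k * 8 * (1/4:ℝ)^k = 8 * ((8:ℝ)^k * (1/4:ℝ)^k) := by ring
              _ = 8 * 2^k := by rw [h6]
          have h8 : (8:ℝ)^(k+1) * (1/4:ℝ)^k ≤ (8:ℝ)^(k+1) * (1/4:ℝ)^n :=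
            mul_le_mul_of_nonneg_left h4 (by positivity)
          have h9 : (2:ℝ)^(k+1) = 2 * 2^k := by rw [pow_succ]; ring
          nlinarith [pow_pos (by norm_num : (0:ℝ) < 2) k]
        -- combine
        have hexp : u (β m) - (8:ℝ)^m • T m - (1/4:ℝ)^m • w
            + (8:ℝ)^m • (u (β n) - (1/4:ℝ)^n • w)
            = (u (β m) - ((8:ℝ)^m * (1/4:ℝ)^n) • w)
              + ((8:ℝ)^m • u (β n) - (8:ℝ)^m • T m) - (1/4:ℝ)^m • w := by
          rw [smul_sub, smul_smul]
          abel
        rw [hexp]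
        have hstep1 : (8:ℝ)^m • u (β n) - (8:ℝ)^m • T m ≤ 0 := sub_nonpos.mpr h1
        have hstep2 : u (β m) - ((8:ℝ)^m * (1/4:ℝ)^n) • w ≤ 0 := by
          have hb1 : u (β m) ≤ (2:ℝ)^m • w := huw m
          have hb2 : (2:ℝ)^m • w ≤ ((8:ℝ)^m * (1/4:ℝ)^n) • w := by
            have := aux_smul_nonneg (sub_nonneg.mpr hcoef) hw0
            rw [sub_smul] at this
            exact sub_nonneg.mp this
          exact sub_nonpos.mpr (hb1.trans hb2)
        have hstep3 : (0:E) ≤ (1/4:ℝ)^m • w := aux_smul_nonneg (by positivity) hw0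
        calc u (β m) - ((8:ℝ)^m * (1/4:ℝ)^n) • w
              + ((8:ℝ)^m • u (β n) - (8:ℝ)^m • T m) - (1/4:ℝ)^m • w
            ≤ 0 + 0 - 0 := by
              refine sub_le_sub (add_le_add hstep2 hstep1) hstep3
          _ = 0 := by simp
      have h2 : y n ≤ (u (β n) - (1/4:ℝ)^n • w)⁺ := by
        refine posPart_mono ?_
        have h3 : (0:E) ≤ (8:ℝ)^n • T n := aux_smul_nonneg (by positivity) (hTnn n)
        calc u (β n) - (8:ℝ)^n • T n - (1/4:ℝ)^n • w
            = u (β n) - (1/4:ℝ)^n • w - (8:ℝ)^n • T n := by abel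
          _ ≤ u (β n) - (1/4:ℝ)^n • w - 0 := sub_le_sub_left h3 _
          _ = u (β n) - (1/4:ℝ)^n • w := sub_zero _
      have h4 : y m ⊓ y n ≤ 0 := by
        calc y m ⊓ y n ≤ (u (β m) - (8:ℝ)^m • T m - (1/4:ℝ)^m • w)⁺ ⊓
            (u (β n) - (1/4:ℝ)^n • w)⁺ := inf_le_inf le_rfl h2
          _ = 0 := hdisj0
      exact le_antisymm h4 (le_inf (hy0 m) (hy0 n))
    intro m n hmn
    rw [abs_of_nonneg (hy0 m), abs_of_nonneg (hy0 n)]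
    rcases lt_or_gt_of_ne hmn with h | h
    · rw [inf_comm]; exact key n m h
    · exact key m n h
  -- lower bound for the pairing
  set M := F (β 0) w with hMdef
  have hM0 : 0 ≤ M := hFx _ _ hw0
  have hFwn : ∀ n, F (β n) w ≤ M := fun n => hmono_pt (hβmono (Nat.zero_le n)) w hw0
  have hlow : ∀ n : ℕ, (3/4)*ε - ε/16 - (1/4:ℝ)^n * M ≤ F (β n) (y n) := by
    intro n
    have ha : F (β n) (u (β n) - (8:ℝ)^n • T n - (1/4:ℝ)^n • w) ≤ F (β n) (y n) :=
      hFmono _ (le_posPart _)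
    have hexp : F (β n) (u (β n) - (8:ℝ)^n • T n - (1/4:ℝ)^n • w)
        = F (β n) (u (β n)) - (8:ℝ)^n * F (β n) (T n) - (1/4:ℝ)^n * F (β n) w := by
      rw [map_sub, map_sub, map_smul, map_smul, smul_eq_mul, smul_eq_mul]
    have h1 : (3/4)*ε ≤ F (β n) (u (β n)) := hu3 _
    have h2 : (8:ℝ)^n * F (β n) (T n) ≤ ε/16 := by
      cases n with
      | zero =>
          rw [hT0, map_zero, mul_zero]
          positivity
      | succ m =>
          have hs := hsmall m
          have h8 : (0:ℝ) < (8:ℝ)^(m+1) := by positivity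
          calc (8:ℝ)^(m+1) * F (β (m+1)) (T (m+1))
              ≤ (8:ℝ)^(m+1) * (ε / (16 * 8^(m+1))) :=
                mul_le_mul_of_nonneg_left hs (by positivity)
            _ = ε/16 := by field_simp
    have h3 : (1/4:ℝ)^n * F (β n) w ≤ (1/4:ℝ)^n * M :=
      mul_le_mul_of_nonneg_left (hFwn n) (by positivity)
    linarith
  -- apply the hypothesis and derive a contradiction
  have hOB : OrdBddSeq (fun n => F (β n)) :=
    ⟨0, F (β 0), fun n => ⟨hF0 _, hanti (hβmono (Nat.zero_le n))⟩⟩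
  have htends := hRHS (fun n => F (β n)) hOB y hy1 hydisj
  have hN : ∀ᶠ n : ℕ in atTop, (1/4:ℝ)^n * M ≤ ε/8 := by
    have ht : Tendsto (fun n : ℕ => (1/4:ℝ)^n * M) atTop (𝓝 0) := by
      have := (tendsto_pow_atTop_nhds_zero_of_lt_one
        (by norm_num : (0:ℝ) ≤ 1/4) (by norm_num : (1/4:ℝ) < 1)).mul_const M
      simpa using this
    exact ht.eventually (eventually_le_nhds (by positivity))
  have hlt : ∀ᶠ n : ℕ in atTop, F (β n) (y n) < ε/2 :=
    htends.eventually (gt_mem_nhds (by positivity : (0:ℝ) < ε/2))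
  obtain ⟨n, hn1, hn2⟩ := (hN.and hlt).exists
  have := hlow n
  linarith


theorem stmt5 {E : Type*} [NormedAddCommGroup E] [Lattice E] [HasSolidNorm E]
    [IsOrderedAddMonoid E] [NormedSpace ℝ E] [CompleteSpace E]
    [Lattice (StrongDual ℝ E)] [HasSolidNorm (StrongDual ℝ E)]
    [CovariantClass (StrongDual ℝ E) (StrongDual ℝ E) (· + ·) (· ≤ ·)]
    (hE' : ∀ f : StrongDual ℝ E, 0 ≤ f ↔ ∀ x : E, 0 ≤ x → 0 ≤ f x) :
    OrderContinuousNorm (StrongDual ℝ E) ↔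
      ∀ f : ℕ → StrongDual ℝ E, OrdBddSeq f →
        ∀ x : ℕ → E, (∀ n, ‖x n‖ ≤ 1) → DisjSeq x →
          Tendsto (fun n => f n (x n)) atTop (𝓝 0) := by
  constructor
  · intro hOC
    exact stmt5_forward hE' hOC
  · intro hRHS
    exact stmt5_backward hE' hRHS
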